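/- For a connected graph G with at least 3 vertices, the routing number rt(G) equals 2 if and only if G is a complete graph. -/

import Mathlib

/-- A single routing step on `G`: an involutive permutation that swaps the pebbles
on the endpoints of each edge of a matching of `G`. -/
def IsMatchingStep {V : Type*} (G : SimpleGraph V) (σ : Equiv.Perm V) : Prop :=
  (∀ v, σ (σ v) = v) ∧ ∀ v, σ v ≠ v → G.Adj v (σ v)

/-- The permutation `π` (giving the destination of each pebble) can be routed on `G`
in `k` matching steps. -/
def RoutableIn {V : Type*} (G : SimpleGraph V) (π : Equiv.Perm V) (k : ℕ) : Prop :=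
  ∃ L : List (Equiv.Perm V), L.length = k ∧ (∀ σ ∈ L, IsMatchingStep G σ) ∧
    L.reverse.prod = π

/-- The routing time `rt(G, π)`: the minimum number of matching steps needed to
route `π` on `G`. -/
noncomputable def routingTime {V : Type*} (G : SimpleGraph V) (π : Equiv.Perm V) : ℕ :=
  sInf {k | RoutableIn G π k}

/-- The routing number `rt(G)`: the maximum of `rt(G, π)` over all permutations `π`. -/
noncomputable def routingNumber {V : Type*} (G : SimpleGraph V) : ℕ :=
  sSup (Set.range fun π : Equiv.Perm V => routingTime G π)

section Aux

variable {V : Type*}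

lemma isMatchingStep_swap [DecidableEq V] {G : SimpleGraph V} {a b : V} (h : G.Adj a b) :
    IsMatchingStep G (Equiv.swap a b) := by
  constructor
  · intro v; exact Equiv.swap_apply_self a b v
  · intro v hv
    rcases eq_or_ne v a with rfl | hva
    · rw [Equiv.swap_apply_left]; exact h
    rcases eq_or_ne v b with rfl | hvb
    · rw [Equiv.swap_apply_right]; exact h.symm
    · rw [Equiv.swap_apply_of_ne_of_ne hva hvb] at hv
      exact absurd rfl hv

/-- Every permutation is a product of two involutions. -/
lemma exists_two_involutions (σ : Equiv.Perm V) :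
    ∃ ρ τ : Equiv.Perm V, (∀ v, ρ (ρ v) = v) ∧ (∀ v, τ (τ v) = v) ∧ ρ * τ = σ := by
  classical
  let s : Setoid V := ⟨σ.SameCycle, Equiv.Perm.SameCycle.equivalence σ⟩
  let rep : V → V := fun v => (Quotient.mk s v).out
  have hrep : ∀ v, σ.SameCycle (rep v) v := fun v => Quotient.mk_out (s := s) v
  have hrep_eq : ∀ v w, σ.SameCycle v w → rep v = rep w := fun v w h =>
    congrArg Quotient.out (Quotient.sound (s := s) h)
  have hex : ∀ v, ∃ i : ℤ, (σ ^ i) (rep v) = v := fun v => hrep v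
  let e : V → ℤ := fun v => (hex v).choose
  have he : ∀ v, (σ ^ e v) (rep v) = v := fun v => (hex v).choose_spec
  have hkey : ∀ (z : V) (a b c : ℤ), (σ ^ a) z = (σ ^ b) z →
      (σ ^ (c - a)) z = (σ ^ (c - b)) z := by
    intro z a b c h
    have h2 := congrArg (fun w => (σ ^ (c - a - b)) w) h
    simp only [← Equiv.Perm.mul_apply, ← zpow_add] at h2
    have e1 : c - a - b + a = c - b := by ring
    have e2 : c - a - b + b = c - a := by ring
    rw [e1, e2] at h2
    exact h2.symm
  let F : ℤ → V → V := fun c v => (σ ^ (c - e v)) (rep v)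
  have hFsame : ∀ (c : ℤ) (v : V), σ.SameCycle v (F c v) :=
    fun c v => (hrep v).symm.trans ⟨c - e v, rfl⟩
  have hFrep : ∀ (c : ℤ) (v : V), rep (F c v) = rep v :=
    fun c v => (hrep_eq _ _ (hFsame c v)).symm
  have hF : ∀ (c : ℤ) (v : V) (i : ℤ), (σ ^ i) (rep v) = v → F c v = (σ ^ (c - i)) (rep v) :=
    fun c v i hi => hkey (rep v) (e v) i c ((he v).trans hi.symm)
  have hFF : ∀ (c d : ℤ) (v : V), F c (F d v) = (σ ^ (c - (d - e v))) (rep v) := by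
    intro c d v
    have h1 : (σ ^ (d - e v)) (rep (F d v)) = F d v := by rw [hFrep]
    have := hF c (F d v) (d - e v) h1
    rwa [hFrep] at this
  have hτ : Function.Involutive (F 0) := by
    intro v
    rw [hFF]
    have h0 : (0 : ℤ) - (0 - e v) = e v := by ring
    rw [h0, he]
  have hρ : Function.Involutive (F 1) := by
    intro v
    rw [hFF]
    have h0 : (1 : ℤ) - (1 - e v) = e v := by ring
    rw [h0, he]
  refine ⟨hρ.toPerm, hτ.toPerm, hρ, hτ, ?_⟩
  ext v
  have hcomp : F 1 (F 0 v) = σ v := by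
    rw [hFF]
    have h1 : (1 : ℤ) - (0 - e v) = 1 + e v := by ring
    rw [h1, zpow_add, zpow_one, Equiv.Perm.mul_apply, he]
  simpa [Function.Involutive.toPerm] using hcomp

/-- On a connected graph, any transposition can be routed in some number of steps. -/
lemma swap_routable [DecidableEq V] {G : SimpleGraph V} {u v : V} (p : G.Walk u v) :
    ∃ k, RoutableIn G (Equiv.swap u v) k := by
  induction p with
  | nil => exact ⟨0, [], rfl, by simp, by simp [Equiv.Perm.one_def]⟩
  | @cons x y z hxy q ih =>
    rcases eq_or_ne x z with rfl | hxz
    · exact ⟨0, [], rfl, by simp, by simp [Equiv.Perm.one_def]⟩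
    rcases eq_or_ne y z with rfl | hyz
    · refine ⟨1, [Equiv.swap x y], rfl, ?_, by simp⟩
      intro σ hσ
      simp only [List.mem_singleton] at hσ
      subst hσ
      exact isMatchingStep_swap hxy
    · obtain ⟨k, L, hL, hmem, hprod⟩ := ih
      refine ⟨k + 2, [Equiv.swap x y] ++ L ++ [Equiv.swap x y], by simp [hL], ?_, ?_⟩
      · intro σ hσ
        simp only [List.mem_append, List.mem_singleton] at hσ
        rcases hσ with (hσ | hσ) | hσ
        · subst hσ; exact isMatchingStep_swap hxy
        · exact hmem σ hσ
        · subst hσ; exact isMatchingStep_swap hxy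
      · have hrev : ([Equiv.swap x y] ++ L ++ [Equiv.swap x y]).reverse
            = [Equiv.swap x y] ++ L.reverse ++ [Equiv.swap x y] := by simp
        have h1 := Equiv.swap_mul_swap_mul_swap (x := z) (y := y) (z := x)
          (Ne.symm hyz) (Ne.symm hxz)
        rw [Equiv.swap_comm y x, Equiv.swap_comm z y] at h1
        simp only [hrev, List.prod_append, List.prod_singleton, List.prod_cons,
          List.prod_nil, mul_one, hprod]
        rw [← h1]

/-- A transposition of two non-adjacent vertices needs at least three steps. -/
lemma three_le_of_not_adj [DecidableEq V] {G : SimpleGraph V} {a b : V}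
    (hab : a ≠ b) (hna : ¬ G.Adj a b) {k : ℕ} (h : RoutableIn G (Equiv.swap a b) k) :
    3 ≤ k := by
  obtain ⟨L, hL, hmem, hprod⟩ := h
  by_contra hlt
  push_neg at hlt
  interval_cases k
  · -- 0 steps
    rw [List.length_eq_zero_iff] at hL
    subst hL
    simp only [List.reverse_nil, List.prod_nil] at hprod
    have := congrArg (fun f => f a) hprod
    simp only [Equiv.Perm.coe_one, id_eq, Equiv.swap_apply_left] at this
    exact hab this
  · -- 1 step
    rw [List.length_eq_one_iff] at hL
    obtain ⟨σ, rfl⟩ := hL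
    simp only [List.reverse_singleton, List.prod_singleton] at hprod
    subst hprod
    have hstep := hmem _ (List.mem_singleton_self _)
    have h1 : Equiv.swap a b a ≠ a := by rw [Equiv.swap_apply_left]; exact hab.symm
    have := hstep.2 a h1
    rw [Equiv.swap_apply_left] at this
    exact hna this
  · -- 2 steps
    rw [List.length_eq_two] at hL
    obtain ⟨σ₁, σ₂, rfl⟩ := hL
    have hprod' : ∀ v, σ₂ (σ₁ v) = Equiv.swap a b v := by
      intro v
      have := congrArg (fun f => f v) hprod
      simpa using this
    have hs₁ := hmem σ₁ (by simp)
    have hs₂ := hmem σ₂ (by simp)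
    set w := σ₁ a with hw
    have hwa : w ≠ a := by
      intro hwa
      have h2 : σ₂ a = b := by
        have := hprod' a
        rwa [← hw, hwa, Equiv.swap_apply_left] at this
      have h3 : G.Adj a (σ₂ a) := hs₂.2 a (by rw [h2]; exact hab.symm)
      rw [h2] at h3
      exact hna h3
    have hadj_aw : G.Adj a w := by
      have := hs₁.2 a (by rw [← hw]; exact hwa)
      rwa [← hw] at this
    have hwb : w ≠ b := fun h => hna (h ▸ hadj_aw)
    have hπw : Equiv.swap a b w = w := Equiv.swap_apply_of_ne_of_ne hwa hwb
    have hσ₁w : σ₁ w = a := by rw [hw]; exact hs₁.1 a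
    have hσ₂a : σ₂ a = w := by
      have := hprod' w
      rwa [hσ₁w, hπw] at this
    have hσ₂w : σ₂ w = b := by
      have := hprod' a
      rwa [← hw, Equiv.swap_apply_left] at this
    have hσ₂b : σ₂ b = w := by
      have := hs₂.1 w
      rwa [hσ₂w] at this
    exact hab (σ₂.injective (hσ₂a.trans hσ₂b.symm))

end Aux

/-- For a connected graph on at least 3 vertices, the routing number equals 2
iff the graph is complete. -/
theorem routingNumber_eq_two_iff_complete
    {V : Type*} [Fintype V] [DecidableEq V] (G : SimpleGraph V)
    (hG : G.Connected) (hcard : 3 ≤ Fintype.card V) :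
    routingNumber G = 2 ↔ G = ⊤ := by
  have bdd : BddAbove (Set.range fun π : Equiv.Perm V => routingTime G π) :=
    Set.Finite.bddAbove (Set.finite_range _)
  constructor
  · -- rt(G) = 2 → G complete
    intro hrt
    by_contra hne
    have hex : ∃ a b : V, a ≠ b ∧ ¬ G.Adj a b := by
      by_contra h
      push_neg at h
      apply hne
      ext a b
      simp only [SimpleGraph.top_adj]
      exact ⟨fun h' => h'.ne, fun h' => h a b h'⟩
    obtain ⟨a, b, hab, hna⟩ := hex
    have hne' : {k | RoutableIn G (Equiv.swap a b) k}.Nonempty := by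
      obtain ⟨p⟩ := hG.preconnected a b
      obtain ⟨k, hk⟩ := swap_routable p
      exact ⟨k, hk⟩
    have h3 : 3 ≤ routingTime G (Equiv.swap a b) :=
      three_le_of_not_adj hab hna (Nat.sInf_mem hne')
    have hle : routingTime G (Equiv.swap a b) ≤ routingNumber G :=
      le_csSup bdd ⟨Equiv.swap a b, rfl⟩
    rw [hrt] at hle
    omega
  · -- G complete → rt(G) = 2
    rintro rfl
    have hall : ∀ π : Equiv.Perm V, routingTime (⊤ : SimpleGraph V) π ≤ 2 := by
      intro π
      obtain ⟨ρ, τ, hρ, hτ, hprod⟩ := exists_two_involutions π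
      have hstep : ∀ σ : Equiv.Perm V, (∀ v, σ (σ v) = v) →
          IsMatchingStep (⊤ : SimpleGraph V) σ :=
        fun σ hσ => ⟨hσ, fun v hv => (SimpleGraph.top_adj _ _).mpr hv.symm⟩
      have hmem2 : RoutableIn (⊤ : SimpleGraph V) π 2 := by
        refine ⟨[τ, ρ], rfl, ?_, ?_⟩
        · intro σ hσ
          simp only [List.mem_cons, List.mem_singleton, List.not_mem_nil, or_false] at hσ
          rcases hσ with rfl | rfl
          · exact hstep _ hτ
          · exact hstep _ hρ
        · simpa using hprod
      exact Nat.sInf_le hmem2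
    apply le_antisymm
    · apply csSup_le (Set.range_nonempty _)
      rintro n ⟨π, rfl⟩
      exact hall π
    · -- exhibit a 3-cycle, which needs at least 2 steps
      obtain ⟨a, b, hab⟩ := Fintype.exists_pair_of_one_lt_card (α := V) (by omega)
      have hcompl : (0 : ℕ) < ({a, b}ᶜ : Finset V).card := by
        rw [Finset.card_compl]
        have h2 : ({a, b} : Finset V).card ≤ 2 :=
          (Finset.card_insert_le a {b}).trans (by simp)
        omega
      obtain ⟨c, hc⟩ := Finset.card_pos.mp hcompl
      rw [Finset.mem_compl, Finset.mem_insert, Finset.mem_singleton] at hc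
      push_neg at hc
      obtain ⟨hca, hcb⟩ := hc
      set π : Equiv.Perm V := Equiv.swap a b * Equiv.swap b c with hπ
      have hπa : π a = b := by
        rw [hπ, Equiv.Perm.mul_apply, Equiv.swap_apply_of_ne_of_ne hab (Ne.symm hca),
          Equiv.swap_apply_left]
      have hπb : π b = c := by
        rw [hπ, Equiv.Perm.mul_apply, Equiv.swap_apply_left,
          Equiv.swap_apply_of_ne_of_ne hca hcb]
      have hmem2 : RoutableIn (⊤ : SimpleGraph V) π 2 := by
        refine ⟨[Equiv.swap b c, Equiv.swap a b], rfl, ?_, by simp [hπ]⟩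
        intro σ hσ
        simp only [List.mem_cons, List.mem_singleton, List.not_mem_nil, or_false] at hσ
        rcases hσ with rfl | rfl
        · exact isMatchingStep_swap ((SimpleGraph.top_adj _ _).mpr hcb.symm)
        · exact isMatchingStep_swap ((SimpleGraph.top_adj _ _).mpr hab)
      have hnot : ∀ k, RoutableIn (⊤ : SimpleGraph V) π k → 2 ≤ k := by
        intro k hk
        obtain ⟨L, hL, hmemL, hprod⟩ := hk
        by_contra hlt
        push_neg at hlt
        interval_cases k
        · rw [List.length_eq_zero_iff] at hL
          subst hL
          simp only [List.reverse_nil, List.prod_nil] at hprod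
          have := congrArg (fun f => f a) hprod
          simp only [Equiv.Perm.coe_one, id_eq] at this
          rw [hπa] at this
          exact hab this
        · rw [List.length_eq_one_iff] at hL
          obtain ⟨σ, rfl⟩ := hL
          simp only [List.reverse_singleton, List.prod_singleton] at hprod
          subst hprod
          have hstep := hmemL _ (List.mem_singleton_self _)
          have h1 := hstep.1 a
          rw [hπa, hπb] at h1
          exact hca h1
      have hmemInf : RoutableIn (⊤ : SimpleGraph V) π (routingTime (⊤ : SimpleGraph V) π) := by
        exact Nat.sInf_mem (⟨2, hmem2⟩ : {k | RoutableIn (⊤ : SimpleGraph V) π k}.Nonempty)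
      have h2le : 2 ≤ routingTime (⊤ : SimpleGraph V) π := hnot _ hmemInf
      exact h2le.trans (le_csSup bdd ⟨π, rfl⟩)
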